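/- Let G be a bipartite simple graph with vertex bipartition (A, B) in which every vertex of A has degree q+1 and every vertex of B has degree q²+1, and suppose G has girth at least 11. Then the number of distinct paths of length 9 (paths with 10 vertices) in G equals |A|·q^12·(q+1). -/

import Mathlib

set_option linter.unusedSectionVars false

open SimpleGraph

namespace PC

variable {V : Type*} {G : SimpleGraph V}

/-- Walk built from a vertex function along consecutive adjacencies. -/
def mkWalk (f : ℕ → V) : ∀ (k : ℕ), (∀ j < k, G.Adj (f j) (f (j+1))) → G.Walk (f 0) (f k)
  | 0, _ => Walk.nil
  | (k+1), h =>
    (mkWalk f k (fun j hj => h j (Nat.lt_succ_of_lt hj))).concat (h k (Nat.lt_succ_self k))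

lemma mkWalk_length (f : ℕ → V) (k : ℕ) (h : ∀ j < k, G.Adj (f j) (f (j+1))) :
    (mkWalk f k h).length = k := by
  induction k with
  | zero => rfl
  | succ k ih => simp [mkWalk, Walk.length_concat, ih]

lemma mkWalk_support (f : ℕ → V) (k : ℕ) (h : ∀ j < k, G.Adj (f j) (f (j+1))) :
    (mkWalk f k h).support = (List.range (k+1)).map f := by
  induction k with
  | zero => rfl
  | succ k ih =>
    simp only [mkWalk, Walk.support_concat, ih, List.concat_eq_append]
    rw [List.range_succ (n := k+1), List.map_append]
    rfl

lemma mkWalk_edges (f : ℕ → V) (k : ℕ) (h : ∀ j < k, G.Adj (f j) (f (j+1))) :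
    (mkWalk f k h).edges = (List.range k).map (fun j => s(f j, f (j+1))) := by
  induction k with
  | zero => rfl
  | succ k ih =>
    simp only [mkWalk, Walk.edges_concat, ih, List.concat_eq_append]
    rw [List.range_succ (n := k), List.map_append]
    rfl

/-- Every walk's support is its `getVert` sequence. -/
lemma support_eq_map_getVert {u v : V} (p : G.Walk u v) :
    p.support = (List.range (p.length + 1)).map p.getVert := by
  induction p with
  | nil => rfl
  | cons h p ih =>
    have hc : (Walk.cons h p).getVert ∘ Nat.succ = p.getVert :=
      funext fun n => Walk.getVert_cons_succ p h
    rw [Walk.support_cons, ih, Walk.length_cons, List.range_succ_eq_map (n := p.length + 1),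
      List.map_cons, List.map_map, hc]
    rfl

/-- Every walk's edge list is its `getVert` edge sequence. -/
lemma edges_eq_map_getVert {u v : V} (p : G.Walk u v) :
    p.edges = (List.range p.length).map (fun j => s(p.getVert j, p.getVert (j+1))) := by
  induction p with
  | nil => rfl
  | cons h p ih =>
    rw [Walk.edges_cons, ih, Walk.length_cons, List.range_succ_eq_map, List.map_cons,
      List.map_map]
    simp [Walk.getVert_cons_succ, Function.comp]

/-- Girth-based key lemma: a "chord" back from the end of a short induced
path creates a short cycle. -/
lemma no_chord (hg : (11 : ℕ∞) ≤ G.egirth) (z : ℕ → V) {n : ℕ} (hn : n ≤ 9)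
    (ha : ∀ j < n, G.Adj (z j) (z (j+1)))
    (hinj : ∀ ⦃j k⦄, j ≤ n → k ≤ n → z j = z k → j = k)
    {i : ℕ} (hi : i + 1 < n) (hadj : G.Adj (z n) (z i)) : False := by
  set f : ℕ → V := fun j => z (i + j) with hf
  have hin : i ≤ n := by omega
  have hfa : ∀ j < n - i, G.Adj (f j) (f (j+1)) := by
    intro j hj
    have : i + j < n := by omega
    simpa [hf, Nat.add_assoc] using ha (i + j) this
  have e0 : f 0 = z i := by simp [hf]
  have ek : f (n - i) = z n := by simp [hf]; congr 1; omega
  set w : G.Walk (z i) (z n) := (mkWalk f (n - i) hfa).copy e0 ek with hw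
  have hwsupp : w.support = (List.range (n - i + 1)).map f := by
    rw [hw, Walk.support_copy, mkWalk_support]
  have hwedges : w.edges = (List.range (n - i)).map (fun j => s(f j, f (j+1))) := by
    rw [hw, Walk.edges_copy, mkWalk_edges]
  have hwpath : w.IsPath := by
    rw [Walk.isPath_def, hwsupp]
    refine List.Nodup.map_on ?_ List.nodup_range
    intro a ha' b hb' hab
    simp only [List.mem_range] at ha' hb'
    have := hinj (j := i + a) (k := i + b) (by omega) (by omega) hab
    omega
  have hcyc : (w.reverse.cons hadj.symm).IsCycle := by
    rw [Walk.cons_isCycle_iff]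
    refine ⟨hwpath.reverse, ?_⟩
    rw [Walk.edges_reverse, List.mem_reverse, hwedges]
    simp only [List.mem_map, List.mem_range, not_exists, not_and]
    intro j hj heq
    rw [Sym2.eq_iff] at heq
    simp only [hf] at heq
    rcases heq with ⟨h1, h2⟩ | ⟨h1, h2⟩
    · have e1 := hinj (j := i + j) (k := i) (by omega) (by omega) h1
      have e2 := hinj (j := i + (j + 1)) (k := n) (by omega) (by omega) h2
      omega
    · have e2 := hinj (j := i + j) (k := n) (by omega) (by omega) h1
      omega
  have hle := SimpleGraph.le_egirth.mp hg _ _ hcyc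
  have hlen : (w.reverse.cons hadj.symm).length = n - i + 1 := by
    rw [Walk.length_cons, Walk.length_reverse, hw, Walk.length_copy, mkWalk_length]
  rw [hlen] at hle
  have : (11 : ℕ) ≤ n - i + 1 := by exact_mod_cast hle
  omega
variable [DecidableEq V]

/-- Clamped access to a tuple. -/
def gv {n : ℕ} (x : Fin (n+1) → V) (j : ℕ) : V :=
  x ⟨min j n, Nat.lt_succ_of_le (min_le_right _ _)⟩

lemma gv_eq {n : ℕ} (x : Fin (n+1) → V) {j : ℕ} (hj : j ≤ n) :
    gv x j = x ⟨j, by omega⟩ := by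
  simp [gv, Nat.min_eq_left hj]

/-- A good tuple: starts in `A`, consecutive vertices adjacent, all distinct. -/
def Good (G : SimpleGraph V) (A : Set V) (n : ℕ) (x : Fin (n+1) → V) : Prop :=
  gv x 0 ∈ A ∧ (∀ j < n, G.Adj (gv x j) (gv x (j+1))) ∧
    ∀ ⦃j k⦄, j ≤ n → k ≤ n → gv x j = gv x k → j = k

variable [Fintype V]

open Classical in
noncomputable def T (G : SimpleGraph V) (A : Set V) (n : ℕ) : Finset (Fin (n+1) → V) :=
  Finset.univ.filter (Good G A n)

open Classical in
lemma mem_T {n : ℕ} {x : Fin (n+1) → V} (A : Set V) :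
    x ∈ T G A n ↔ Good G A n x := by simp [T]

section Bip

variable {A B : Set V} {q : ℕ}
variable (hpart : ∀ x : V, (x ∈ A ∧ x ∉ B) ∨ (x ∈ B ∧ x ∉ A))
variable (hadj : ∀ ⦃x y : V⦄, G.Adj x y → (x ∈ A ∧ y ∈ B) ∨ (x ∈ B ∧ y ∈ A))

include hpart hadj in
lemma good_parity {n : ℕ} {x : Fin (n+1) → V} (hx : Good G A n x) :
    ∀ j ≤ n, (Even j → gv x j ∈ A) ∧ (¬ Even j → gv x j ∈ B) := by
  intro j
  induction j with
  | zero => exact fun _ => ⟨fun _ => hx.1, fun h => absurd Even.zero h⟩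
  | succ j ih =>
    intro hj
    have hIH := ih (by omega)
    have hAdj := hx.2.1 j (by omega)
    rcases hadj hAdj with ⟨h1, h2⟩ | ⟨h1, h2⟩
    · -- gv x j ∈ A, so j even, so j+1 odd
      have hje : Even j := by
        by_contra ho
        have := hIH.2 ho
        rcases hpart (gv x j) with ⟨_, hnB⟩ | ⟨_, hnA⟩
        · exact hnB this
        · exact hnA h1
      constructor
      · intro he; exact absurd hje (by simpa [Nat.even_add_one] using he)
      · intro _; exact h2
    · have hjo : ¬ Even j := by
        by_contra he
        have := hIH.1 he
        rcases hpart (gv x j) with ⟨_, hnB⟩ | ⟨_, hnA⟩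
        · exact hnB h1
        · exact hnA this
      constructor
      · intro _; exact h2
      · intro ho; exact absurd (by simpa [Nat.even_add_one] using hjo) ho

end Bip

lemma good_restrict {n : ℕ} {x : Fin (n+2) → V} (A : Set V) (hx : Good G A (n+1) x) :
    Good G A n (x ∘ Fin.castSucc) := by
  have hg : ∀ j ≤ n, gv (x ∘ Fin.castSucc) j = gv x j := by
    intro j hj
    rw [gv_eq _ hj, gv_eq _ (by omega : j ≤ n + 1)]
    rfl
  refine ⟨?_, ?_, ?_⟩
  · rw [hg 0 (by omega)]; exact hx.1
  · intro j hj
    rw [hg j (by omega), hg (j+1) (by omega)]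
    exact hx.2.1 j (by omega)
  · intro j k hj hk he
    rw [hg j hj, hg k hk] at he
    exact hx.2.2 (by omega) (by omega) he

lemma gv_snoc_of_le {n : ℕ} (y : Fin (n+1) → V) (v : V) {j : ℕ} (hj : j ≤ n) :
    gv (Fin.snoc y v : Fin (n+2) → V) j = gv y j := by
  rw [gv_eq _ (by omega : j ≤ n + 1), gv_eq _ hj]
  exact Fin.snoc_castSucc _ _ (⟨j, by omega⟩ : Fin (n+1))

lemma gv_snoc_last {n : ℕ} (y : Fin (n+1) → V) (v : V) :
    gv (Fin.snoc y v : Fin (n+2) → V) (n+1) = v := by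
  rw [gv_eq _ (le_refl (n+1))]
  exact Fin.snoc_last _ _

section Count

variable {A B : Set V} {q : ℕ} [DecidableRel G.Adj]
variable (hpart : ∀ x : V, (x ∈ A ∧ x ∉ B) ∨ (x ∈ B ∧ x ∉ A))
variable (hadj : ∀ ⦃x y : V⦄, G.Adj x y → (x ∈ A ∧ y ∈ B) ∨ (x ∈ B ∧ y ∈ A))
variable (hA : ∀ x ∈ A, G.degree x = q + 1)
variable (hB : ∀ x ∈ B, G.degree x = q ^ 2 + 1)
variable (hgirth : (11 : ℕ∞) ≤ G.egirth)

/-- the extension fiber over a good tuple -/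
lemma fiber_card {n : ℕ} (hn : n ≤ 8) (y : Fin (n+1) → V) (hy : Good G A n y) :
    ((T G A (n+1)).filter (fun x => x ∘ Fin.castSucc = y)).card
      = (G.neighborFinset (gv y n) \ Finset.image y Finset.univ).card := by
  apply Finset.card_bij (fun x _ => x (Fin.last (n+1)))
  · -- maps into target
    intro x hx
    simp only [Finset.mem_filter, mem_T] at hx
    obtain ⟨hgood, hrest⟩ := hx
    have hlast : x (Fin.last (n+1)) = gv x (n+1) := (gv_eq x (le_refl (n+1))).symm
    rw [Finset.mem_sdiff, SimpleGraph.mem_neighborFinset]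
    constructor
    · have := hgood.2.1 n (by omega)
      have h1 : gv x n = gv y n := by
        rw [gv_eq x (by omega : n ≤ n+1), gv_eq y (le_refl n), ← hrest]
        rfl
      rw [hlast, ← h1]
      exact this
    · rw [Finset.mem_image]
      rintro ⟨j, -, hj⟩
      have hxj : x (Fin.castSucc j) = y j := by rw [← hrest]; rfl
      have : gv x j.val = gv x (n+1) := by
        rw [gv_eq x (by omega : j.val ≤ n+1), gv_eq x (le_refl (n+1))]
        have hc : (⟨j.val, by omega⟩ : Fin (n+2)) = Fin.castSucc j := rfl
        rw [hc, hxj, hj]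
        rfl
      have := hgood.2.2 (by omega : j.val ≤ n+1) (le_refl (n+1)) this
      omega
  · -- injective
    intro x1 hx1 x2 hx2 he
    simp only [Finset.mem_filter] at hx1 hx2
    funext j
    refine Fin.lastCases ?_ ?_ j
    · exact he
    · intro i
      have e1 : x1 (Fin.castSucc i) = y i := by rw [← hx1.2]; rfl
      have e2 : x2 (Fin.castSucc i) = y i := by rw [← hx2.2]; rfl
      rw [e1, e2]
  · -- surjective
    intro v hv
    rw [Finset.mem_sdiff, SimpleGraph.mem_neighborFinset] at hv
    obtain ⟨hadj', hnimg⟩ := hv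
    refine ⟨Fin.snoc y v, ?_, Fin.snoc_last _ _⟩
    simp only [Finset.mem_filter, mem_T]
    have hrest : (Fin.snoc y v : Fin (n+2) → V) ∘ Fin.castSucc = y := by
      funext i; exact Fin.snoc_castSucc _ _ _
    refine ⟨⟨?_, ?_, ?_⟩, hrest⟩
    · rw [gv_snoc_of_le y v (by omega : 0 ≤ n)]; exact hy.1
    · intro j hj
      rcases Nat.lt_or_ge j n with h | h
      · rw [gv_snoc_of_le y v (by omega : j ≤ n), gv_snoc_of_le y v (by omega : j+1 ≤ n)]
        exact hy.2.1 j h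
      · have hjn : j = n := by omega
        rw [hjn, gv_snoc_of_le y v (le_refl n), gv_snoc_last]
        exact hadj'
    · intro j k hj hk he
      by_contra hne
      -- wlog via cases
      have key : ∀ a b : ℕ, a ≤ n+1 → b ≤ n+1 → a ≠ b →
          gv (Fin.snoc y v : Fin (n+2) → V) a = gv (Fin.snoc y v : Fin (n+2) → V) b → False := by
        intro a b ha hb hab heq
        rcases Nat.lt_or_ge a (n+1) with ha' | ha' <;> rcases Nat.lt_or_ge b (n+1) with hb' | hb'
        · rw [gv_snoc_of_le y v (by omega : a ≤ n), gv_snoc_of_le y v (by omega : b ≤ n)] at heq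
          exact hab (hy.2.2 (by omega) (by omega) heq)
        · have hb'' : b = n+1 := by omega
          subst hb''
          rw [gv_snoc_of_le y v (by omega : a ≤ n), gv_snoc_last] at heq
          apply hnimg
          rw [Finset.mem_image]
          exact ⟨⟨a, by omega⟩, Finset.mem_univ _, by rw [← heq, gv_eq y (by omega : a ≤ n)]⟩
        · have ha'' : a = n+1 := by omega
          subst ha''
          rw [gv_snoc_of_le y v (by omega : b ≤ n), gv_snoc_last] at heq
          apply hnimg
          rw [Finset.mem_image]
          exact ⟨⟨b, by omega⟩, Finset.mem_univ _, by rw [heq, gv_eq y (by omega : b ≤ n)]⟩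
        · omega
      exact key j k hj hk hne he

include hA in
lemma target_card_zero (y : Fin 1 → V) (hy : Good G A 0 y) :
    (G.neighborFinset (gv y 0) \ Finset.image y Finset.univ).card = q + 1 := by
  have himg : Finset.image y Finset.univ = {y 0} := by
    ext v
    simp only [Finset.mem_image, Finset.mem_univ, true_and, Finset.mem_singleton]
    constructor
    · rintro ⟨i, hi⟩; rw [Subsingleton.elim (0 : Fin 1) i]; exact hi.symm
    · intro h; exact ⟨0, h.symm⟩
  have hg0 : gv y 0 = y 0 := congrArg y (Fin.ext (by simp))
  have hdisj : Disjoint ({y 0} : Finset V) (G.neighborFinset (gv y 0)) := by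
    rw [Finset.disjoint_singleton_left, SimpleGraph.mem_neighborFinset, hg0]
    exact G.irrefl
  rw [himg, sdiff_eq_self_iff_disjoint.mpr hdisj, card_neighborFinset_eq_degree]
  exact hA _ hy.1

include hgirth in
lemma target_card_succ {n : ℕ} (hn : n + 1 ≤ 9) (y : Fin (n+2) → V)
    (hy : Good G A (n+1) y) :
    (G.neighborFinset (gv y (n+1)) \ Finset.image y Finset.univ).card
      = G.degree (gv y (n+1)) - 1 := by
  have hinter : G.neighborFinset (gv y (n+1)) ∩ Finset.image y Finset.univ = {gv y n} := by
    ext v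
    simp only [Finset.mem_inter, SimpleGraph.mem_neighborFinset, Finset.mem_image,
      Finset.mem_univ, true_and, Finset.mem_singleton]
    constructor
    · rintro ⟨hadj', j, hj⟩
      have hvj : v = gv y j.val := by rw [gv_eq y (by omega : j.val ≤ n+1), ← hj]
      rcases Nat.lt_or_ge (j.val + 1) (n+1) with hlt | hge
      · exfalso
        refine no_chord hgirth (gv y) hn (hy.2.1) (hy.2.2) hlt ?_
        rw [← hvj]; exact hadj'
      · have : j.val = n ∨ j.val = n + 1 := by omega
        rcases this with h' | h'
        · rw [hvj, h']
        · exfalso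
          rw [hvj, h'] at hadj'
          exact G.irrefl hadj'
    · intro h
      subst h
      refine ⟨(hy.2.1 n (by omega)).symm, ⟨n, by omega⟩, ?_⟩
      rw [gv_eq y (by omega : n ≤ n+1)]
  have hcount := Finset.card_inter_add_card_sdiff (G.neighborFinset (gv y (n+1)))
    (Finset.image y Finset.univ)
  rw [hinter, Finset.card_singleton, card_neighborFinset_eq_degree] at hcount
  omega

include hpart hadj hA hB hgirth in
lemma step_card {n : ℕ} (hn : n ≤ 8) :
    (T G A (n+1)).card = (T G A n).card *
      (if n = 0 then q + 1 else if Even n then q else q ^ 2) := by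
  classical
  have hmap : ∀ x ∈ T G A (n+1), x ∘ Fin.castSucc ∈ T G A n := by
    intro x hx
    rw [mem_T] at hx ⊢
    exact good_restrict A hx
  rw [Finset.card_eq_sum_card_fiberwise hmap]
  have hfib : ∀ y ∈ T G A n, ((T G A (n+1)).filter (fun x => x ∘ Fin.castSucc = y)).card
      = (if n = 0 then q + 1 else if Even n then q else q ^ 2) := by
    intro y hy
    rw [mem_T] at hy
    rw [fiber_card hn y hy]
    rcases Nat.eq_zero_or_pos n with h0 | hpos
    · subst h0
      simp only [if_pos rfl]
      exact target_card_zero hA y hy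
    · obtain ⟨m, hm⟩ : ∃ m, n = m + 1 := ⟨n - 1, by omega⟩
      subst hm
      have := target_card_succ hgirth (by omega : m + 1 ≤ 9) y hy
      rw [this]
      have hpar := good_parity hpart hadj hy (m+1) (le_refl _)
      by_cases he : Even (m+1)
      · rw [if_neg (by omega), if_pos he, hA _ (hpar.1 he)]
        omega
      · rw [if_neg (by omega), if_neg he, hB _ (hpar.2 he)]
        omega
  rw [Finset.sum_congr rfl hfib, Finset.sum_const, smul_eq_mul]

lemma T_zero : (T G A 0).card = A.ncard := by
  classical
  have h1 : A.ncard = (Finset.univ.filter (· ∈ A)).card := by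
    rw [← Set.ncard_coe_finset]
    congr 1
    ext v
    simp
  rw [h1]
  apply Finset.card_bij (fun x _ => x 0)
  · intro x hx
    rw [mem_T] at hx
    have := hx.1
    rw [gv_eq x (le_refl 0)] at this
    simpa using this
  · intro x1 h1 x2 h2 he
    funext i
    have hi : i = 0 := by
      apply Fin.ext
      omega
    rw [hi]
    exact he
  · intro v hv
    simp only [Finset.mem_filter, Finset.mem_univ, true_and] at hv
    refine ⟨fun _ => v, ?_, rfl⟩
    rw [mem_T]
    refine ⟨?_, ?_, ?_⟩
    · rw [gv_eq _ (le_refl 0)]; exact hv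
    · intro j hj; omega
    · intro j k hj hk _; omega

include hpart hadj hA hB hgirth in
lemma T_nine : (T G A 9).card = A.ncard * q ^ 12 * (q + 1) := by
  have s0 := step_card hpart hadj hA hB hgirth (n := 0) (by omega)
  have s1 := step_card hpart hadj hA hB hgirth (n := 1) (by omega)
  have s2 := step_card hpart hadj hA hB hgirth (n := 2) (by omega)
  have s3 := step_card hpart hadj hA hB hgirth (n := 3) (by omega)
  have s4 := step_card hpart hadj hA hB hgirth (n := 4) (by omega)
  have s5 := step_card hpart hadj hA hB hgirth (n := 5) (by omega)
  have s6 := step_card hpart hadj hA hB hgirth (n := 6) (by omega)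
  have s7 := step_card hpart hadj hA hB hgirth (n := 7) (by omega)
  have s8 := step_card hpart hadj hA hB hgirth (n := 8) (by omega)
  norm_num [Nat.even_iff] at s0 s1 s2 s3 s4 s5 s6 s7 s8
  rw [s8, s7, s6, s5, s4, s3, s2, s1, s0, T_zero]
  ring
end Count

section Final

variable {A B : Set V} {q : ℕ} [DecidableRel G.Adj]
variable (hpart : ∀ x : V, (x ∈ A ∧ x ∉ B) ∨ (x ∈ B ∧ x ∉ A))
variable (hadj : ∀ ⦃x y : V⦄, G.Adj x y → (x ∈ A ∧ y ∈ B) ∨ (x ∈ B ∧ y ∈ A))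

/-- The edge-set of a good 10-tuple. -/
noncomputable def Phi (x : Fin 10 → V) : Finset (Sym2 V) :=
  ((List.range 9).map (fun j => s(gv x j, gv x (j+1)))).toFinset

lemma mem_Phi {x : Fin 10 → V} {e : Sym2 V} :
    e ∈ Phi x ↔ ∃ j < 9, e = s(gv x j, gv x (j+1)) := by
  simp only [Phi, List.mem_toFinset, List.mem_map, List.mem_range]
  constructor
  · rintro ⟨j, hj, rfl⟩; exact ⟨j, hj, rfl⟩
  · rintro ⟨j, hj, rfl⟩; exact ⟨j, hj, rfl⟩

lemma occurs {x : Fin 10 → V} (hx : Good G A 9 x) {m j : ℕ} (hm : m ≤ 9) (hj : j < 9)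
    (h : gv x m = gv x j ∨ gv x m = gv x (j+1)) : m = j ∨ m = j + 1 := by
  rcases h with h | h
  · exact Or.inl (hx.2.2 hm (by omega) h)
  · exact Or.inr (hx.2.2 hm (by omega) h)

lemma edge_inj {x : Fin 10 → V} (hx : Good G A 9 x) {j k : ℕ} (hj : j < 9) (hk : k < 9)
    (h : s(gv x j, gv x (j+1)) = s(gv x k, gv x (k+1))) : j = k := by
  rw [Sym2.eq_iff] at h
  rcases h with ⟨h1, h2⟩ | ⟨h1, h2⟩
  · exact hx.2.2 (by omega) (by omega) h1
  · have e1 := hx.2.2 (j := j) (k := k+1) (by omega) (by omega) h1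
    have e2 := hx.2.2 (j := j+1) (k := k) (by omega) (by omega) h2
    omega

include hpart hadj in
lemma good_tuple_eq {x y : Fin 10 → V} (hx : Good G A 9 x) (hy : Good G A 9 y)
    (hxy : ∀ j < 9, ∃ k < 9, s(gv x j, gv x (j+1)) = s(gv y k, gv y (k+1)))
    (hyx : ∀ j < 9, ∃ k < 9, s(gv y j, gv y (j+1)) = s(gv x k, gv x (k+1))) :
    ∀ j ≤ 9, gv x j = gv y j := by
  intro j
  induction j using Nat.strong_induction_on with
  | _ j IH =>
  intro hj9
  match j, hj9 with
  | 0, _ =>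
    obtain ⟨k, hk, hsym⟩ := hxy 0 (by omega)
    rw [Sym2.eq_iff] at hsym
    -- get m with gv x 0 = gv y m
    have hkey : ∃ m ≤ 9, ∃ j' < 9, gv x 0 = gv y m ∧
        (m = j' ∨ m = j' + 1) ∧ s(gv y j', gv y (j'+1)) ∈ Phi y := by
      rcases hsym with ⟨h1, _⟩ | ⟨h1, _⟩
      · exact ⟨k, by omega, k, hk, h1, Or.inl rfl, mem_Phi.mpr ⟨k, hk, rfl⟩⟩
      · exact ⟨k + 1, by omega, k, hk, h1, Or.inr rfl, mem_Phi.mpr ⟨k, hk, rfl⟩⟩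
    obtain ⟨m, hm9, j', hj', hx0, _, _⟩ := hkey
    have hmA : gv y m ∈ A := hx0 ▸ hx.1
    have hmeven : Even m := by
      by_contra ho
      have hB' := (good_parity hpart hadj hy m hm9).2 ho
      rcases hpart (gv y m) with ⟨_, hnB⟩ | ⟨_, hnA⟩
      · exact hnB hB'
      · exact hnA hmA
    rcases Nat.eq_zero_or_pos m with h0 | hpos
    · rw [h0] at hx0; exact hx0
    · exfalso
      obtain ⟨t, rfl⟩ : ∃ t, m = t + 2 := by
        rcases hmeven with ⟨c, hc⟩; exact ⟨m - 2, by omega⟩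
      have ht8 : t + 2 ≤ 8 := by
        rcases hmeven with ⟨c, hc⟩; omega
      -- two edges of y contain gv y (t+2)
      obtain ⟨a, ha9, hea⟩ := hyx (t+1) (by omega)
      obtain ⟨b, hb9, heb⟩ := hyx (t+2) (by omega)
      -- gv x 0 is in both x-edges a and b
      have hmem1 : gv x 0 = gv x a ∨ gv x 0 = gv x (a+1) := by
        have : gv y (t+2) = gv x a ∨ gv y (t+2) = gv x (a+1) := by
          have := hea
          rw [Sym2.eq_iff] at this
          rcases this with ⟨_, h2⟩ | ⟨_, h2⟩
          · exact Or.inr h2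
          · exact Or.inl h2
        rcases this with h | h
        · exact Or.inl (hx0.trans h)
        · exact Or.inr (hx0.trans h)
      have hmem2 : gv x 0 = gv x b ∨ gv x 0 = gv x (b+1) := by
        have : gv y (t+2) = gv x b ∨ gv y (t+2) = gv x (b+1) := by
          have := heb
          rw [Sym2.eq_iff] at this
          rcases this with ⟨h1, _⟩ | ⟨h1, _⟩
          · exact Or.inl h1
          · exact Or.inr h1
        rcases this with h | h
        · exact Or.inl (hx0.trans h)
        · exact Or.inr (hx0.trans h)
      have ha0 : a = 0 := by rcases occurs hx (by omega) ha9 hmem1 with h | h <;> omega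
      have hb0 : b = 0 := by rcases occurs hx (by omega) hb9 hmem2 with h | h <;> omega
      have : s(gv y (t+1), gv y (t+1+1)) = s(gv y (t+2), gv y (t+2+1)) := by
        rw [hea, heb, ha0, hb0]
      have := edge_inj hy (by omega) (by omega) this
      omega
  | (i+1), _ =>
    have hIH : ∀ j' ≤ i, gv x j' = gv y j' := fun j' hj' => IH j' (by omega) (by omega)
    obtain ⟨k, hk, hsym0⟩ := hxy i (by omega)
    rcases Sym2.eq_iff.mp hsym0 with ⟨h1, h2⟩ | ⟨h1, h2⟩
    · -- gv x i = gv y k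
      have : gv y i = gv y k := (hIH i (le_refl i)).symm.trans h1
      have hik := hy.2.2 (j := i) (k := k) (by omega) (by omega) this
      rw [← hik] at h2
      exact h2
    · -- gv x i = gv y (k+1) : contradiction
      exfalso
      have : gv y i = gv y (k+1) := (hIH i (le_refl i)).symm.trans h1
      have hik := hy.2.2 (j := i) (k := k+1) (by omega) (by omega) this
      obtain ⟨t, rfl⟩ : ∃ t, i = t + 1 := ⟨i - 1, by omega⟩
      have hkt : k = t := by omega
      subst hkt
      have hext : s(gv x k, gv x (k+1)) = s(gv y k, gv y (k+1)) := by
        rw [hIH k (by omega), hIH (k+1) (by omega)]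
      have hcol : s(gv x (k+1), gv x (k+1+1)) = s(gv x k, gv x (k+1)) :=
        hsym0.trans hext.symm
      have := edge_inj hx (by omega) (by omega) hcol
      omega

lemma good_to_walk {x : Fin 10 → V} (hx : Good G A 9 x) :
    ∃ (u v : V) (p : G.Walk u v), p.IsPath ∧ p.length = 9 ∧ p.edges.toFinset = Phi x := by
  have hadjs : ∀ j < 9, G.Adj (gv x j) (gv x (j+1)) := hx.2.1
  refine ⟨gv x 0, gv x 9, mkWalk (gv x) 9 hadjs, ?_, mkWalk_length _ _ _, ?_⟩
  · rw [Walk.isPath_def, mkWalk_support]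
    refine List.Nodup.map_on ?_ List.nodup_range
    intro a ha b hb hab
    simp only [List.mem_range] at ha hb
    exact hx.2.2 (by omega) (by omega) hab
  · rw [mkWalk_edges]
    rfl

lemma walk_to_good {u v : V} (p : G.Walk u v) (hp : p.IsPath) (hlen : p.length = 9)
    (hu : u ∈ A) : ∃ x : Fin 10 → V, Good G A 9 x ∧ Phi x = p.edges.toFinset ∧ gv x 9 = v := by
  set x : Fin 10 → V := fun i => p.getVert i.val with hxdef
  have hgv : ∀ j ≤ 9, gv x j = p.getVert j := by
    intro j hj
    rw [gv_eq x hj]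
  have hnodup : ((List.range 10).map p.getVert).Nodup := by
    have := hp.support_nodup
    rw [support_eq_map_getVert, hlen] at this
    exact this
  refine ⟨x, ⟨?_, ?_, ?_⟩, ?_, ?_⟩
  · rw [hgv 0 (by omega), Walk.getVert_zero]; exact hu
  · intro j hj
    rw [hgv j (by omega), hgv (j+1) (by omega)]
    exact p.adj_getVert_succ (by omega)
  · intro j k hj hk he
    rw [hgv j hj, hgv k hk] at he
    exact List.inj_on_of_nodup_map hnodup (List.mem_range.mpr (by omega))
      (List.mem_range.mpr (by omega)) he
  · have hedges : p.edges = (List.range 9).map (fun j => s(p.getVert j, p.getVert (j+1))) := by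
      rw [edges_eq_map_getVert, hlen]
    rw [Phi, hedges]
    congr 1
  · rw [hgv 9 (le_refl 9), ← hlen]
    exact p.getVert_length

include hpart hadj in
lemma endpoint_in_A {u v : V} (p : G.Walk u v) (hp : p.IsPath) (hlen : p.length = 9)
    (hu : u ∈ B) : v ∈ A := by
  have hpart' : ∀ x : V, (x ∈ B ∧ x ∉ A) ∨ (x ∈ A ∧ x ∉ B) := fun x => (hpart x).symm
  have hadj' : ∀ ⦃x y : V⦄, G.Adj x y → (x ∈ B ∧ y ∈ A) ∨ (x ∈ A ∧ y ∈ B) :=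
    fun x y h => (hadj h).symm
  obtain ⟨x, hx, -, hgv9⟩ := walk_to_good (A := B) p hp hlen hu
  have := (good_parity hpart' hadj' hx 9 (le_refl 9)).2 (by decide)
  rwa [hgv9] at this

end Final
end PC

open PC in
/-- In a bipartite graph with bipartition `(A, B)`, vertices of `A` having degree
`q + 1`, vertices of `B` having degree `q² + 1`, and girth at least 11, the number
of distinct paths of length 9 (paths on 10 vertices, a path and its reversal
counted once, identified with their edge sets) equals `|A| · q^12 · (q+1)`. -/
theorem count_paths_length_nine {V : Type u} [Fintype V] [DecidableEq V]
    (G : SimpleGraph V) [DecidableRel G.Adj] (q : ℕ) (A B : Set V)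
    (hpart : ∀ x : V, (x ∈ A ∧ x ∉ B) ∨ (x ∈ B ∧ x ∉ A))
    (hadj : ∀ ⦃x y : V⦄, G.Adj x y → (x ∈ A ∧ y ∈ B) ∨ (x ∈ B ∧ y ∈ A))
    (hA : ∀ x ∈ A, G.degree x = q + 1)
    (hB : ∀ x ∈ B, G.degree x = q ^ 2 + 1)
    (hgirth : (11 : ℕ∞) ≤ G.egirth) :
    ({s : Finset (Sym2 V) | ∃ (u v : V) (p : G.Walk u v),
        p.IsPath ∧ p.length = 9 ∧ p.edges.toFinset = s}).ncard
      = A.ncard * q ^ 12 * (q + 1) := by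
  classical
  have hset : {s : Finset (Sym2 V) | ∃ (u v : V) (p : G.Walk u v),
      p.IsPath ∧ p.length = 9 ∧ p.edges.toFinset = s}
      = ↑((T G A 9).image Phi) := by
    ext s
    simp only [Set.mem_setOf_eq, Finset.coe_image, Set.mem_image, Finset.mem_coe]
    constructor
    · rintro ⟨u, v, p, hp, hlen, rfl⟩
      rcases hpart u with ⟨huA, -⟩ | ⟨huB, -⟩
      · obtain ⟨x, hx, hPhi, -⟩ := walk_to_good p hp hlen huA
        exact ⟨x, (mem_T A).mpr hx, hPhi⟩
      · have hvA : v ∈ A := endpoint_in_A hpart hadj p hp hlen huB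
        obtain ⟨x, hx, hPhi, -⟩ := walk_to_good p.reverse hp.reverse (by simp [hlen]) hvA
        refine ⟨x, (mem_T A).mpr hx, ?_⟩
        rw [hPhi, Walk.edges_reverse, List.toFinset_reverse]
    · rintro ⟨x, hx, rfl⟩
      exact good_to_walk ((mem_T A).mp hx)
  rw [hset, Set.ncard_coe_finset, Finset.card_image_of_injOn,
    T_nine hpart hadj hA hB hgirth]
  intro x hx y hy hPhi
  rw [Finset.mem_coe, mem_T] at hx hy
  have hxy : ∀ j < 9, ∃ k < 9, s(gv x j, gv x (j+1)) = s(gv y k, gv y (k+1)) := by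
    intro j hj
    have hm : s(gv x j, gv x (j+1)) ∈ Phi y := hPhi ▸ mem_Phi.mpr ⟨j, hj, rfl⟩
    obtain ⟨k, hk, he⟩ := mem_Phi.mp hm
    exact ⟨k, hk, he⟩
  have hyx : ∀ j < 9, ∃ k < 9, s(gv y j, gv y (j+1)) = s(gv x k, gv x (k+1)) := by
    intro j hj
    have hm : s(gv y j, gv y (j+1)) ∈ Phi x := hPhi.symm ▸ mem_Phi.mpr ⟨j, hj, rfl⟩
    obtain ⟨k, hk, he⟩ := mem_Phi.mp hm
    exact ⟨k, hk, he⟩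
  have heq := good_tuple_eq hpart hadj hx hy hxy hyx
  funext i
  have h1 : x i = gv x i.val := by rw [gv_eq x (by omega : i.val ≤ 9)]
  have h2 : y i = gv y i.val := by rw [gv_eq y (by omega : i.val ≤ 9)]
  rw [h1, h2, heq i.val (by omega)]
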